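/- The ℤ[t^{±1}]-module ℤ[t^{±1}]/(t−2) ⊕ ℤ[t^{±1}]/(2t−1) is not cyclic, i.e. there is no single element generating it as a ℤ[t^{±1}]-module; in particular it is not isomorphic as a ℤ[t^{±1}]-module to ℤ[t^{±1}]/((t−2)(2t−1)). -/

import Mathlib

open LaurentPolynomial

local notation "R" => LaurentPolynomial ℤ

noncomputable def tL : LaurentPolynomial ℤ := LaurentPolynomial.T 1

noncomputable def phi3 : LaurentPolynomial ℤ →ₐ[ℤ] ZMod 3 :=
  AddMonoidAlgebra.lift ℤ (ZMod 3) ℤ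
    ((Units.coeHom (ZMod 3)).comp (zpowersHom (ZMod 3)ˣ (-1)))

lemma phi3_tL : phi3 tL = 2 := by
  show phi3 (AddMonoidAlgebra.single (1 : ℤ) (1 : ℤ)) = 2
  rw [phi3, AddMonoidAlgebra.lift_single]
  decide

lemma phi3_a : phi3 (tL - 2) = 0 := by
  rw [map_sub, phi3_tL, map_ofNat]
  decide

lemma phi3_b : phi3 (2 * tL - 1) = 0 := by
  rw [map_sub, map_mul, phi3_tL, map_ofNat, map_one]
  decide

lemma smul_mk' (I : Ideal R) (r a : R) :
    r • Ideal.Quotient.mk I a = Ideal.Quotient.mk I (r * a) := by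
  rw [← smul_eq_mul]
  exact (Submodule.Quotient.mk_smul I r a).symm

lemma cyclic_quot (r : LaurentPolynomial ℤ) :
    Submodule.span (LaurentPolynomial ℤ)
      {(Ideal.Quotient.mk (Ideal.span {r} : Ideal R) 1)} = ⊤ := by
  rw [eq_top_iff]
  rintro z -
  obtain ⟨a, rfl⟩ := Ideal.Quotient.mk_surjective (I := (Ideal.span {r} : Ideal R)) z
  have : (Ideal.Quotient.mk (Ideal.span {r} : Ideal R)) a
      = a • (Ideal.Quotient.mk (Ideal.span {r} : Ideal R) 1) := by
    rw [smul_mk', mul_one]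
  rw [this]
  exact Submodule.smul_mem _ _ (Submodule.mem_span_singleton_self _)

theorem split_extension_module_not_cyclic :
    (¬ ∃ x : (R ⧸ (Ideal.span {tL - 2} : Ideal R)) × (R ⧸ (Ideal.span {2 * tL - 1} : Ideal R)),
        Submodule.span (LaurentPolynomial ℤ) {x} = ⊤) ∧
    ¬ Nonempty (((R ⧸ (Ideal.span {tL - 2} : Ideal R)) × (R ⧸ (Ideal.span {2 * tL - 1} : Ideal R)))
        ≃ₗ[LaurentPolynomial ℤ] (R ⧸ (Ideal.span {(tL - 2) * (2 * tL - 1)} : Ideal R))) := by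
  set I1 : Ideal R := Ideal.span {tL - 2} with hI1
  set I2 : Ideal R := Ideal.span {2 * tL - 1} with hI2
  have main : ¬ ∃ x : (R ⧸ I1) × (R ⧸ I2),
      Submodule.span (LaurentPolynomial ℤ) {x} = ⊤ := by
    rintro ⟨x, hx⟩
    obtain ⟨A, hA⟩ := Ideal.Quotient.mk_surjective (I := I1) x.1
    obtain ⟨B, hB⟩ := Ideal.Quotient.mk_surjective (I := I2) x.2
    have h1 : ((1 : R ⧸ I1), (0 : R ⧸ I2)) ∈
        Submodule.span (LaurentPolynomial ℤ) {x} := hx ▸ Submodule.mem_top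
    have h2 : ((0 : R ⧸ I1), (1 : R ⧸ I2)) ∈
        Submodule.span (LaurentPolynomial ℤ) {x} := hx ▸ Submodule.mem_top
    rw [Submodule.mem_span_singleton] at h1 h2
    obtain ⟨p, hp⟩ := h1
    obtain ⟨q, hq⟩ := h2
    have hp1 : Ideal.Quotient.mk I1 (p * A) = 1 := by
      rw [← smul_mk', hA]
      exact congrArg Prod.fst hp
    have hp2 : Ideal.Quotient.mk I2 (p * B) = 0 := by
      rw [← smul_mk', hB]
      exact congrArg Prod.snd hp
    have hq1 : Ideal.Quotient.mk I1 (q * A) = 0 := by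
      rw [← smul_mk', hA]
      exact congrArg Prod.fst hq
    have hq2 : Ideal.Quotient.mk I2 (q * B) = 1 := by
      rw [← smul_mk', hB]
      exact congrArg Prod.snd hq
    have hp1' : p * A - 1 ∈ I1 := by
      rw [← Ideal.Quotient.eq_zero_iff_mem, map_sub, map_one, hp1, sub_self]
    have hp2' : p * B ∈ I2 := Ideal.Quotient.eq_zero_iff_mem.mp hp2
    have hq1' : q * A ∈ I1 := Ideal.Quotient.eq_zero_iff_mem.mp hq1
    have hq2' : q * B - 1 ∈ I2 := by
      rw [← Ideal.Quotient.eq_zero_iff_mem, map_sub, map_one, hq2, sub_self]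
    rw [hI1, Ideal.mem_span_singleton] at hp1' hq1'
    rw [hI2, Ideal.mem_span_singleton] at hp2' hq2'
    obtain ⟨c1, hc1⟩ := hp1'
    obtain ⟨c2, hc2⟩ := hp2'
    obtain ⟨c3, hc3⟩ := hq1'
    obtain ⟨c4, hc4⟩ := hq2'
    have e1 : phi3 p * phi3 A = 1 := by
      have := congrArg phi3 hc1
      rw [map_sub, map_mul, map_mul, phi3_a, map_one, zero_mul, sub_eq_zero] at this
      exact this
    have e2 : phi3 p * phi3 B = 0 := by
      have := congrArg phi3 hc2
      rw [map_mul, map_mul, phi3_b, zero_mul] at this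
      exact this
    have e3 : phi3 q * phi3 A = 0 := by
      have := congrArg phi3 hc3
      rw [map_mul, map_mul, phi3_a, zero_mul] at this
      exact this
    have e4 : phi3 q * phi3 B = 1 := by
      have := congrArg phi3 hc4
      rw [map_sub, map_mul, map_mul, phi3_b, map_one, zero_mul, sub_eq_zero] at this
      exact this
    have : (1 : ZMod 3) = 0 := by
      calc (1 : ZMod 3) = (phi3 p * phi3 A) * (phi3 q * phi3 B) := by rw [e1, e4, one_mul]
        _ = (phi3 q * phi3 A) * (phi3 p * phi3 B) := by ring
        _ = 0 := by rw [e3, zero_mul]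
    exact one_ne_zero this
  refine ⟨main, ?_⟩
  rintro ⟨e⟩
  apply main
  refine ⟨e.symm (Ideal.Quotient.mk _ 1), ?_⟩
  have h : Submodule.span (LaurentPolynomial ℤ) {e.symm (Ideal.Quotient.mk (Ideal.span
      {(tL - 2) * (2 * tL - 1)} : Ideal R) 1)} =
      Submodule.map (e.symm : _ →ₗ[LaurentPolynomial ℤ] _) (Submodule.span (LaurentPolynomial ℤ)
        {Ideal.Quotient.mk (Ideal.span {(tL - 2) * (2 * tL - 1)} : Ideal R) 1}) := by
    rw [Submodule.map_span, Set.image_singleton]; rfl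
  rw [h, cyclic_quot, Submodule.map_top, LinearEquiv.range]
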